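/- arXiv:1306.6373 — 2 statements merged into one kernel-verified Lean document; each statement's English description precedes it below -/
import Mathlib

section
/- Fix constants 0 < a < b and suppose p = p(n) satisfies n·p = 1 + O(n^{-1/3}). Let f_n be the indicator that G(n,p) contains a cycle of length ℓ for some integer ℓ ∈ (a·n^{1/3}, b·n^{1/3}). If the noise levels ε = ε(n) ∈ (0,1) satisfy ε(n)·n^{1/3} → 0, then P(f_n(ω^{ε(n)}) ≠ f_n(ω)) → 0 as n → ∞; that is, (f_n) is noise stable w.r.t. ε(n). -/
set_option linter.unusedSectionVars false
set_option linter.unusedVariables false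
set_option maxHeartbeats 1000000


open Finset Filter

namespace BooleanNoise

/-- The Boolean truth value of a proposition (classically). -/
noncomputable def bOf (P : Prop) : Bool := @decide P (Classical.propDecidable P)

section Basic

variable {Λ : Type*} [Fintype Λ] [DecidableEq Λ]

/-- Bernoulli(`p`) weight of a single bit. -/
def bern (p : ℝ) : Bool → ℝ := fun b => if b then p else 1 - p

/-- Weight of a configuration under the product Bernoulli(`p`) measure. -/
def wt (p : ℝ) (ω : Λ → Bool) : ℝ := ∏ i, bern p (ω i)

/-- Probability of an event under the product Bernoulli(`p`) measure. -/
noncomputable def pr (p : ℝ) (A : Set (Λ → Bool)) : ℝ :=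
  ∑ ω : Λ → Bool, A.indicator (wt p) ω

/-- Expectation of a real random variable under the product Bernoulli(`p`) measure. -/
noncomputable def ev (p : ℝ) (X : (Λ → Bool) → ℝ) : ℝ :=
  ∑ ω : Λ → Bool, wt p ω * X ω

/-- Joint single-coordinate weight of `(ω i, (ω^ε) i)`: the coordinate is kept with
probability `1 - ε` and resampled as a fresh Bernoulli(`p`) bit with probability `ε`. -/
def cwt (p ε : ℝ) (x y : Bool) : ℝ :=
  bern p x * ((if y = x then 1 - ε else 0) + ε * bern p y)

/-- Joint weight of the pair `(ω, ω^ε)`. -/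
def jwt (p ε : ℝ) (q : (Λ → Bool) × (Λ → Bool)) : ℝ :=
  ∏ i, cwt p ε (q.1 i) (q.2 i)

/-- Probability of an event for the pair `(ω, ω^ε)`. -/
noncomputable def jpr (p ε : ℝ) (A : Set ((Λ → Bool) × (Λ → Bool))) : ℝ :=
  ∑ q : (Λ → Bool) × (Λ → Bool), A.indicator (jwt p ε) q

/-- Covariance of `f ω` and `f (ω^ε)`. -/
noncomputable def cov (p ε : ℝ) (f : (Λ → Bool) → Bool) : ℝ :=
  jpr p ε {q | f q.1 = true ∧ f q.2 = true}
    - jpr p ε {q | f q.1 = true} * jpr p ε {q | f q.2 = true}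

/-- `P(f ω ≠ f (ω^ε))`. -/
noncomputable def disagree (p ε : ℝ) (f : (Λ → Bool) → Bool) : ℝ :=
  jpr p ε {q | f q.1 ≠ f q.2}

/-- `f` is monotone increasing (with respect to the coordinatewise order `false < true`). -/
def MonotoneBool (f : (Λ → Bool) → Bool) : Prop :=
  ∀ ⦃ω ω' : Λ → Bool⦄, ω ≤ ω' → f ω ≤ f ω'

/-- `W` forces `f = 1`: any configuration that is all ones on `W` has `f`-value `true`. -/
def ForcesOne (f : (Λ → Bool) → Bool) (W : Finset Λ) : Prop :=
  ∀ ω : Λ → Bool, (∀ i ∈ W, ω i = true) → f ω = true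

/-- `W` is a 1-witness for `f`: a minimal set forcing `f = 1`. -/
def IsOneWitness (f : (Λ → Bool) → Bool) (W : Finset Λ) : Prop :=
  ForcesOne f W ∧ ∀ W' ⊆ W, ForcesOne f W' → W' = W

/-- `W` forces `f = 0`: any configuration that is all zeros on `W` has `f`-value `false`. -/
def ForcesZero (f : (Λ → Bool) → Bool) (W : Finset Λ) : Prop :=
  ∀ ω : Λ → Bool, (∀ i ∈ W, ω i = false) → f ω = false

/-- `W` is a 0-witness for `f`: a minimal set forcing `f = 0`. -/
def IsZeroWitness (f : (Λ → Bool) → Bool) (W : Finset Λ) : Prop :=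
  ForcesZero f W ∧ ∀ W' ⊆ W, ForcesZero f W' → W' = W

/-- `P(f(ω^ε) = 1 ∣ ω ≡ 1 on W)`. -/
noncomputable def prNoisyOneGivenOnes (p ε : ℝ) (f : (Λ → Bool) → Bool) (W : Finset Λ) : ℝ :=
  jpr p ε {q | f q.2 = true ∧ ∀ i ∈ W, q.1 i = true}
    / jpr p ε {q | ∀ i ∈ W, q.1 i = true}

/-- `P(f(ω^ε) = 0 ∣ ω ≡ 0 on W)`. -/
noncomputable def prNoisyZeroGivenZeros (p ε : ℝ) (f : (Λ → Bool) → Bool) (W : Finset Λ) : ℝ :=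
  jpr p ε {q | f q.2 = false ∧ ∀ i ∈ W, q.1 i = false}
    / jpr p ε {q | ∀ i ∈ W, q.1 i = false}

/-- `P(f(ω^ε) = 1 ∣ f(ω) = 1)`. -/
noncomputable def prNoisyOneGivenOne (p ε : ℝ) (f : (Λ → Bool) → Bool) : ℝ :=
  jpr p ε {q | f q.2 = true ∧ f q.1 = true} / jpr p ε {q | f q.1 = true}

/-- `max_{W ∈ W₁(f)} [P(f(ω^ε)=1 ∣ ω ≡ 1 on W) − P(f=1)]`. -/
noncomputable def oneSNSgap (p ε : ℝ) (f : (Λ → Bool) → Bool) : ℝ :=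
  ⨆ W : {W : Finset Λ // IsOneWitness f W},
    (prNoisyOneGivenOnes p ε f W.1 - pr p {ω | f ω = true})

/-- `max_{W ∈ W₀(f)} [P(f(ω^ε)=0 ∣ ω ≡ 0 on W) − P(f=0)]`. -/
noncomputable def zeroSNSgap (p ε : ℝ) (f : (Λ → Bool) → Bool) : ℝ :=
  ⨆ W : {W : Finset Λ // IsZeroWitness f W},
    (prNoisyZeroGivenZeros p ε f W.1 - pr p {ω | f ω = false})

end Basic

/-- A sequence of Boolean functions is non-degenerate if `P(fₙ = 1)` stays bounded
away from `0` and from `1`. -/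
def Nondeg {Λ : ℕ → Type*} [∀ n, Fintype (Λ n)] [∀ n, DecidableEq (Λ n)]
    (p : ℕ → ℝ) (f : ∀ n, (Λ n → Bool) → Bool) : Prop :=
  ∃ c : ℝ, 0 < c ∧ ∀ᶠ n : ℕ in atTop,
    c ≤ pr (p n) {ω | f n ω = true} ∧ pr (p n) {ω | f n ω = true} ≤ 1 - c

section Graphs

/-- The index set of the `n.choose 2` potential edges of a graph on `Fin n`. -/
abbrev EdgeIdx (n : ℕ) := {e : Fin n × Fin n // e.1 < e.2}

/-- The graph on `Fin n` determined by an edge configuration. -/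
def graphOf {n : ℕ} (ω : EdgeIdx n → Bool) : SimpleGraph (Fin n) where
  Adj i j := ∃ e : EdgeIdx n, ω e = true ∧
    ((e.1.1 = i ∧ e.1.2 = j) ∨ (e.1.1 = j ∧ e.1.2 = i))
  symm := by
    constructor
    rintro i j ⟨e, he, h⟩
    exact ⟨e, he, h.symm⟩
  loopless := by
    constructor
    rintro i ⟨e, he, (⟨h1, h2⟩ | ⟨h1, h2⟩)⟩ <;>
      · have := e.2
        rw [h1, h2] at this
        exact lt_irrefl i this

/-- `G` contains a cycle of length `ℓ`. -/
def hasCycleOfLength {V : Type*} (G : SimpleGraph V) (ℓ : ℕ) : Prop :=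
  ∃ (v : V) (c : G.Walk v v), c.IsCycle ∧ c.length = ℓ

/-- The minimum degree of `G` is at least `k`. -/
def minDegreeAtLeast {V : Type*} (G : SimpleGraph V) (k : ℕ) : Prop :=
  ∀ v : V, k ≤ (G.neighborSet v).ncard

/-- `G` contains a copy of `H`. -/
def containsCopy {V W : Type*} (G : SimpleGraph V) (H : SimpleGraph W) : Prop :=
  ∃ φ : H →g G, Function.Injective φ

/-- The number of copies of `H` in `G` (subgraphs of `G` isomorphic to `H`). -/
noncomputable def copyCount {V W : Type*} (G : SimpleGraph V) (H : SimpleGraph W) : ℕ :=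
  Nat.card {G' : G.Subgraph // Nonempty (G'.coe ≃g H)}

/-- A graph is strictly balanced if every proper subgraph with at least one vertex has a
strictly smaller average degree, i.e. edge/vertex ratio. -/
def StrictlyBalanced {V : Type*} [Fintype V] (H : SimpleGraph V) : Prop :=
  ∀ H' : H.Subgraph, H' ≠ ⊤ → H'.verts.Nonempty →
    (H'.edgeSet.ncard : ℝ) / (H'.verts.ncard : ℝ)
      < (H.edgeSet.ncard : ℝ) / (Fintype.card V : ℝ)

end Graphs

end BooleanNoise

namespace BooleanNoise

section AuxProb

variable {Λ : Type*} [Fintype Λ] [DecidableEq Λ]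

-- auxiliary
lemma bOf_eq_true {P : Prop} : bOf P = true ↔ P := by
  simp [bOf]

lemma bern_nonneg {p : ℝ} (h0 : 0 ≤ p) (h1 : p ≤ 1) (x : Bool) : 0 ≤ bern p x := by
  cases x <;> simp [bern] <;> linarith

lemma cwt_nonneg {p ε : ℝ} (h0 : 0 ≤ p) (h1 : p ≤ 1) (e0 : 0 ≤ ε) (e1 : ε ≤ 1)
    (x y : Bool) : 0 ≤ cwt p ε x y := by
  apply mul_nonneg (bern_nonneg h0 h1 x)
  apply add_nonneg
  · split <;> linarith
  · exact mul_nonneg e0 (bern_nonneg h0 h1 y)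

lemma jwt_nonneg {p ε : ℝ} (h0 : 0 ≤ p) (h1 : p ≤ 1) (e0 : 0 ≤ ε) (e1 : ε ≤ 1)
    (q : (Λ → Bool) × (Λ → Bool)) : 0 ≤ jwt p ε q :=
  Finset.prod_nonneg fun i _ => cwt_nonneg h0 h1 e0 e1 _ _

lemma jpr_nonneg {p ε : ℝ} (h0 : 0 ≤ p) (h1 : p ≤ 1) (e0 : 0 ≤ ε) (e1 : ε ≤ 1)
    (A : Set ((Λ → Bool) × (Λ → Bool))) : 0 ≤ jpr p ε A :=
  Finset.sum_nonneg fun q _ =>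
    Set.indicator_nonneg (fun x _ => jwt_nonneg h0 h1 e0 e1 x) q

lemma jpr_le_sum {p ε : ℝ} (h0 : 0 ≤ p) (h1 : p ≤ 1) (e0 : 0 ≤ ε) (e1 : ε ≤ 1)
    {ι : Type*} (s : Finset ι) (A : Set ((Λ → Bool) × (Λ → Bool)))
    (B : ι → Set ((Λ → Bool) × (Λ → Bool)))
    (hsub : ∀ q ∈ A, ∃ i ∈ s, q ∈ B i) :
    jpr p ε A ≤ ∑ i ∈ s, jpr p ε (B i) := by
  unfold jpr
  rw [Finset.sum_comm]
  apply Finset.sum_le_sum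
  intro q _
  by_cases hq : q ∈ A
  · rw [Set.indicator_of_mem hq]
    obtain ⟨i, hi, hBi⟩ := hsub q hq
    have h1' : jwt p ε q = (B i).indicator (jwt p ε) q := (Set.indicator_of_mem hBi _).symm
    rw [h1']
    exact Finset.single_le_sum
      (fun j _ => Set.indicator_nonneg (fun x _ => jwt_nonneg h0 h1 e0 e1 x) q) hi
  · rw [Set.indicator_of_notMem hq]
    exact Finset.sum_nonneg fun j _ =>
      Set.indicator_nonneg (fun x _ => jwt_nonneg h0 h1 e0 e1 x) q

lemma ite_all_prod {Q : Λ → Prop} [DecidablePred Q] (c : Λ → ℝ) :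
    (if (∀ i, Q i) then ∏ i, c i else 0) = ∏ i, if Q i then c i else 0 := by
  by_cases h : ∀ i, Q i
  · rw [if_pos h]
    exact Finset.prod_congr rfl fun i _ => (if_pos (h i)).symm
  · rw [if_neg h]
    push_neg at h
    obtain ⟨i, hi⟩ := h
    exact (Finset.prod_eq_zero (Finset.mem_univ i) (show (if Q i then c i else 0) = 0 from if_neg hi)).symm

lemma jpr_forall (p ε : ℝ) (P : Λ → Bool → Bool → Prop) [∀ i x y, Decidable (P i x y)] :
    jpr p ε {q | ∀ i, P i (q.1 i) (q.2 i)}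
      = ∏ i, ∑ z : Bool × Bool, if P i z.1 z.2 then cwt p ε z.1 z.2 else 0 := by
  classical
  rw [Fintype.prod_sum]
  unfold jpr
  rw [← Equiv.sum_comp (Equiv.arrowProdEquivProdArrow Λ (fun _ => Bool) (fun _ => Bool))]
  apply Finset.sum_congr rfl
  intro x _
  rw [Set.indicator_apply]
  have : (Equiv.arrowProdEquivProdArrow Λ (fun _ => Bool) (fun _ => Bool)) x
      = (fun i => (x i).1, fun i => (x i).2) := rfl
  rw [this]
  simp only [Set.mem_setOf_eq]
  exact ite_all_prod _

lemma sum_cwt (p ε : ℝ) : ∑ z : Bool × Bool, cwt p ε z.1 z.2 = 1 := by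
  simp [Fintype.sum_prod_type, Fintype.sum_bool, cwt, bern]
  ring

lemma sum_cwt_diff (p ε : ℝ) :
    ∑ z : Bool × Bool, (if z.1 ≠ z.2 then cwt p ε z.1 z.2 else 0) = 2*ε*p*(1-p) := by
  simp [Fintype.sum_prod_type, Fintype.sum_bool, cwt, bern]
  ring

lemma sum_cwt_or (p ε : ℝ) :
    ∑ z : Bool × Bool, (if (z.1 || z.2) = true then cwt p ε z.1 z.2 else 0)
      = p + ε*p*(1-p) := by
  simp [Fintype.sum_prod_type, Fintype.sum_bool, cwt, bern]
  ring


end AuxProb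

section AuxWalk

open SimpleGraph

variable {V : Type*} {G : SimpleGraph V}

lemma getVert_eq_support_getElem {u v : V} (p : G.Walk u v) :
    ∀ (i : ℕ) (h : i < p.support.length), p.getVert i = p.support[i] := by
  induction p with
  | nil => intro i h; simp [SimpleGraph.Walk.support_nil] at h; subst h; rfl
  | cons hadj q ih =>
    intro i h
    cases i with
    | zero => rfl
    | succ j =>
      simp only [SimpleGraph.Walk.support_cons, List.length_cons] at h
      have := ih j (by omega)
      simpa [SimpleGraph.Walk.getVert_cons_succ] using this

lemma exists_of_mem_edges {u v : V} (p : G.Walk u v) {ed : Sym2 V}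
    (h : ed ∈ p.edges) : ∃ i, i < p.length ∧ ed = s(p.getVert i, p.getVert (i+1)) := by
  induction p with
  | nil => simp [SimpleGraph.Walk.edges_nil] at h
  | cons hadj q ih =>
    rw [SimpleGraph.Walk.edges_cons, List.mem_cons] at h
    rcases h with h | h
    · exact ⟨0, by simp [SimpleGraph.Walk.length_cons], by
        simpa [SimpleGraph.Walk.getVert_zero, SimpleGraph.Walk.getVert_cons_succ] using h⟩
    · obtain ⟨i, hi, hed⟩ := ih h
      exact ⟨i+1, by simp [SimpleGraph.Walk.length_cons]; omega, by
        simpa [SimpleGraph.Walk.getVert_cons_succ] using hed⟩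

lemma cycle_getVert_inj {x : V} {c : G.Walk x x} (hc : c.IsCycle) :
    Function.Injective (fun i : Fin c.length => c.getVert i.1) := by
  have hlen : c.support.length = c.length + 1 := c.length_support
  have htl : c.support.tail.length = c.length := by
    simp [List.length_tail, hlen]
  have hnd : c.support.tail.Nodup := hc.support_nodup
  have h3 : 3 ≤ c.length := hc.three_le_length
  have htail : ∀ (m : ℕ) (h : m < c.length),
      c.getVert (m+1) = c.support.tail[m]'(by omega) := by
    intro m h
    rw [List.getElem_tail]
    exact getVert_eq_support_getElem c (m+1) (by omega)
  have hzero : c.getVert 0 = c.support.tail[c.length - 1]'(by omega) := by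
    have h1 : c.getVert 0 = c.getVert (c.length - 1 + 1) := by
      rw [show c.length - 1 + 1 = c.length by omega, c.getVert_length, c.getVert_zero]
    rw [h1]
    exact htail (c.length - 1) (by omega)
  intro i j hij
  simp only at hij
  have hi := i.2; have hj := j.2
  apply Fin.ext
  by_cases h0i : i.1 = 0 <;> by_cases h0j : j.1 = 0
  · omega
  · exfalso
    have e1 : i.1 = 0 := h0i
    have hj1 : j.1 - 1 + 1 = j.1 := by omega
    rw [e1, hzero] at hij
    rw [show j.1 = j.1 - 1 + 1 by omega, htail (j.1 - 1) (by omega)] at hij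
    have := (List.Nodup.getElem_inj_iff hnd).mp hij
    omega
  · exfalso
    have e1 : j.1 = 0 := h0j
    rw [e1, hzero] at hij
    rw [show i.1 = i.1 - 1 + 1 by omega, htail (i.1 - 1) (by omega)] at hij
    have := (List.Nodup.getElem_inj_iff hnd).mp hij
    omega
  · rw [show i.1 = i.1 - 1 + 1 by omega, htail (i.1 - 1) (by omega)] at hij
    rw [show j.1 = j.1 - 1 + 1 by omega, htail (j.1 - 1) (by omega)] at hij
    have := (List.Nodup.getElem_inj_iff hnd).mp hij
    omega


end AuxWalk

section AuxEdge

/-- `e` has endpoints `u` and `w` (in some order). -/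
def EMatch {n : ℕ} (u w : Fin n) (e : EdgeIdx n) : Prop :=
  (e.1.1 = u ∧ e.1.2 = w) ∨ (e.1.1 = w ∧ e.1.2 = u)

lemma ematch_unique {n : ℕ} {u w : Fin n} {e e' : EdgeIdx n}
    (h : EMatch u w e) (h' : EMatch u w e') : e = e' := by
  have he := e.2; have he' := e'.2
  rcases h with ⟨h1, h2⟩ | ⟨h1, h2⟩ <;> rcases h' with ⟨h1', h2'⟩ | ⟨h1', h2'⟩
  · exact Subtype.ext (Prod.ext (h1.trans h1'.symm) (h2.trans h2'.symm))
  · exfalso; rw [h1, h2] at he; rw [h1', h2'] at he'; exact absurd he (lt_asymm he')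
  · exfalso; rw [h1, h2] at he; rw [h1', h2'] at he'; exact absurd he (lt_asymm he')
  · exact Subtype.ext (Prod.ext (h1.trans h1'.symm) (h2.trans h2'.symm))

lemma ematch_symm {n : ℕ} {u w : Fin n} {e : EdgeIdx n} (h : EMatch u w e) :
    EMatch w u e := h.symm

lemma ematch_pair {n : ℕ} {u w u' w' : Fin n} {e : EdgeIdx n}
    (h : EMatch u w e) (h' : EMatch u' w' e) :
    (u = u' ∧ w = w') ∨ (u = w' ∧ w = u') := by
  rcases h with ⟨h1, h2⟩ | ⟨h1, h2⟩ <;> rcases h' with ⟨h1', h2'⟩ | ⟨h1', h2'⟩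
  · exact Or.inl ⟨h1.symm.trans h1', h2.symm.trans h2'⟩
  · exact Or.inr ⟨h1.symm.trans h1', h2.symm.trans h2'⟩
  · exact Or.inr ⟨h2.symm.trans h2', h1.symm.trans h1'⟩
  · exact Or.inl ⟨h2.symm.trans h2', h1.symm.trans h1'⟩

def mkEdge {n : ℕ} (u w : Fin n) (h : u ≠ w) : EdgeIdx n :=
  if hlt : u < w then ⟨(u, w), hlt⟩ else ⟨(w, u), lt_of_le_of_ne (not_lt.mp hlt) (Ne.symm h)⟩

lemma mkEdge_ematch {n : ℕ} (u w : Fin n) (h : u ≠ w) : EMatch u w (mkEdge u w h) := by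
  unfold mkEdge
  split
  · exact Or.inl ⟨rfl, rfl⟩
  · exact Or.inr ⟨rfl, rfl⟩

lemma graphOf_adj_iff {n : ℕ} {ω : EdgeIdx n → Bool} {u w : Fin n} :
    (graphOf ω).Adj u w ↔ ∃ e : EdgeIdx n, ω e = true ∧ EMatch u w e := by
  constructor
  · rintro ⟨e, he, h⟩; exact ⟨e, he, h⟩
  · rintro ⟨e, he, h⟩; exact ⟨e, he, h⟩

/-- The cyclic successor on `Fin ℓ`. -/
def nxt {ℓ : ℕ} (i : Fin ℓ) : Fin ℓ :=
  if h : i.1 + 1 < ℓ then ⟨i.1 + 1, h⟩ else ⟨0, i.pos⟩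

lemma nxt_val {ℓ : ℕ} (i : Fin ℓ) : (nxt i).1 = (i.1 + 1) % ℓ := by
  have hi := i.2
  unfold nxt
  split
  · next h => exact (Nat.mod_eq_of_lt h).symm
  · next h =>
      have h1 : i.1 + 1 = ℓ := by omega
      simp [h1, Nat.mod_self]

lemma nxt_ne {ℓ : ℕ} (hℓ : 3 ≤ ℓ) (i : Fin ℓ) : nxt i ≠ i := by
  have hi := i.2
  intro h
  have hv := congrArg Fin.val h
  rw [nxt_val] at hv
  rcases Nat.lt_or_ge (i.1 + 1) ℓ with h' | h'
  · rw [Nat.mod_eq_of_lt h'] at hv; omega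
  · have h1 : i.1 + 1 = ℓ := by omega
    rw [h1, Nat.mod_self] at hv
    omega

lemma nxt_nxt_ne {ℓ : ℕ} (hℓ : 3 ≤ ℓ) (i : Fin ℓ) : nxt (nxt i) ≠ i := by
  have hi := i.2
  intro h
  have hv := congrArg Fin.val h
  rw [nxt_val, nxt_val] at hv
  rcases Nat.lt_or_ge (i.1 + 2) ℓ with h' | h'
  · rw [Nat.mod_eq_of_lt (show i.1 + 1 < ℓ by omega)] at hv
    rw [Nat.mod_eq_of_lt (show i.1 + 1 + 1 < ℓ by omega)] at hv
    omega
  · rcases Nat.lt_or_ge (i.1 + 1) ℓ with h'' | h''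
    · rw [Nat.mod_eq_of_lt h''] at hv
      rw [show i.1 + 1 + 1 = ℓ from by omega, Nat.mod_self] at hv
      omega
    · rw [show i.1 + 1 = ℓ from by omega, Nat.mod_self] at hv
      rw [Nat.mod_eq_of_lt (show 0 + 1 < ℓ by omega)] at hv
      omega

lemma nxt_add {ℓ : ℕ} (k j : Fin ℓ) : nxt (k + j) = k + nxt j := by
  apply Fin.ext
  rw [nxt_val, Fin.add_def, Fin.add_def, nxt_val]
  simp only [Nat.mod_add_mod, Nat.add_mod_mod]
  rw [Nat.add_assoc]


end AuxEdge

section AuxEvent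

open SimpleGraph

/-- `e` is one of the cyclic edges of the vertex sequence `v`. -/
def inEdge {n ℓ : ℕ} (v : Fin ℓ → Fin n) (e : EdgeIdx n) : Prop :=
  ∃ i : Fin ℓ, EMatch (v i) (v (nxt i)) e

/-- `e` is the 0th cyclic edge of the vertex sequence `v`. -/
def isFirst {n ℓ : ℕ} (v : Fin ℓ → Fin n) (e : EdgeIdx n) : Prop :=
  ∃ i : Fin ℓ, i.1 = 0 ∧ EMatch (v i) (v (nxt i)) e

/-- The per-coordinate condition of the bad event. -/
def EvP {n ℓ : ℕ} (v : Fin ℓ → Fin n) (e : EdgeIdx n) (x y : Bool) : Prop :=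
  (inEdge v e → (x || y) = true) ∧ (isFirst v e → x ≠ y)

/-- The bad event attached to a cyclic vertex sequence `v`: every cyclic edge of `v` is
present in at least one of the two configurations, and the two configurations differ
on the 0th cyclic edge. -/
def Ev {n ℓ : ℕ} (v : Fin ℓ → Fin n) : Set ((EdgeIdx n → Bool) × (EdgeIdx n → Bool)) :=
  {q | ∀ e, EvP v e (q.1 e) (q.2 e)}

lemma Ev_symm {n ℓ : ℕ} {v : Fin ℓ → Fin n} {ω τ : EdgeIdx n → Bool}
    (h : (ω, τ) ∈ Ev v) : (τ, ω) ∈ Ev v := by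
  intro e
  obtain ⟨h1, h2⟩ := h e
  refine ⟨fun hin => ?_, fun hf => (h2 hf).symm⟩
  have := h1 hin
  simp only [Bool.or_comm] at this ⊢
  exact this

lemma extract_side {n : ℕ} {ω τ : EdgeIdx n → Bool} {x : Fin n} {c : (graphOf ω).Walk x x}
    (hc : c.IsCycle)
    (hno : ¬ hasCycleOfLength (graphOf τ) c.length) :
    ∃ v : Fin c.length → Fin n, Function.Injective v ∧ (ω, τ) ∈ Ev v := by
  have h3 := hc.three_le_length
  set ℓ := c.length with hℓdef
  let w : Fin ℓ → Fin n := fun i => c.getVert i.1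
  have hw : Function.Injective w := cycle_getVert_inj hc
  have hnv : ∀ i : Fin ℓ, w (nxt i) = c.getVert (i.1 + 1) := by
    intro i
    have hi := i.2
    show c.getVert (nxt i).1 = _
    rw [nxt_val]
    rcases Nat.lt_or_ge (i.1 + 1) ℓ with h' | h'
    · rw [Nat.mod_eq_of_lt h']
    · rw [show i.1 + 1 = ℓ from by omega, Nat.mod_self, c.getVert_zero, c.getVert_length]
  have hadj : ∀ i : Fin ℓ, (graphOf ω).Adj (w i) (w (nxt i)) := by
    intro i
    rw [hnv i]
    exact c.adj_getVert_succ i.2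
  by_cases hall : ∀ (i : Fin ℓ) (e : EdgeIdx n), EMatch (w i) (w (nxt i)) e → ω e = τ e
  · exfalso
    apply hno
    have hedges : ∀ ed ∈ c.edges, ed ∈ (graphOf τ).edgeSet := by
      intro ed hed
      obtain ⟨j, hj, rfl⟩ := exists_of_mem_edges c hed
      have hj' : j < ℓ := hj
      obtain ⟨e, he, hm⟩ := graphOf_adj_iff.mp (hadj ⟨j, hj'⟩)
      have hτ : τ e = true := (hall ⟨j, hj'⟩ e hm) ▸ he
      have hAdjτ : (graphOf τ).Adj (w ⟨j, hj'⟩) (w (nxt ⟨j, hj'⟩)) :=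
        graphOf_adj_iff.mpr ⟨e, hτ, hm⟩
      rw [SimpleGraph.mem_edgeSet]
      rw [hnv ⟨j, hj'⟩] at hAdjτ
      exact hAdjτ
    exact ⟨x, c.transfer _ hedges, hc.transfer _, c.length_transfer _⟩
  · push_neg at hall
    obtain ⟨i0, e0, hm0, hne0⟩ := hall
    haveI : NeZero ℓ := ⟨by omega⟩
    refine ⟨fun j => w (i0 + j), hw.comp fun j j' hjj => by
      simpa using add_right_injective i0 hjj, fun e => ⟨?_, ?_⟩⟩
    · rintro ⟨j, hj⟩
      simp only [← nxt_add] at hj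
      obtain ⟨e', he', hm'⟩ := graphOf_adj_iff.mp (hadj (i0 + j))
      rw [ematch_unique hj hm']
      show (ω e' || τ e') = true
      rw [he']
      rfl
    · rintro ⟨j, hj0, hj⟩
      have hjz : j = 0 := Fin.ext (by simpa using hj0)
      subst hjz
      simp only [← nxt_add, add_zero] at hj
      have : e = e0 := ematch_unique hj hm0
      subst this
      show ω e ≠ τ e
      exact hne0


lemma jpr_Ev_le {n ℓ : ℕ} (hℓ : 3 ≤ ℓ) {v : Fin ℓ → Fin n} (hv : Function.Injective v)
    {p ε : ℝ} (hp0 : 0 ≤ p) (hp1 : p ≤ 1) (he0 : 0 ≤ ε) (he1 : ε ≤ 1) :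
    jpr p ε (Ev v) ≤ 2 * ε * (p * (1 + ε)) ^ ℓ := by
  classical
  have hne : ∀ i : Fin ℓ, v i ≠ v (nxt i) := fun i h => (nxt_ne hℓ i) (hv h.symm)
  set φ : Fin ℓ → EdgeIdx n := fun i => mkEdge (v i) (v (nxt i)) (hne i) with hφdef
  have hφm : ∀ i, EMatch (v i) (v (nxt i)) (φ i) := fun i => mkEdge_ematch _ _ _
  have hφinj : Function.Injective φ := by
    intro i j hij
    have h2 := hφm j
    rw [← hij] at h2
    rcases ematch_pair (hφm i) h2 with ⟨ha, hb⟩ | ⟨ha, hb⟩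
    · exact hv ha
    · exfalso
      have hj : j = nxt i := (hv hb).symm
      have hi : i = nxt j := hv ha
      rw [hj] at hi
      exact nxt_nxt_ne hℓ i hi.symm
  set T : Finset (EdgeIdx n) := Finset.image φ Finset.univ with hTdef
  have hT : ∀ e, e ∈ T ↔ inEdge v e := by
    intro e
    simp only [hTdef, Finset.mem_image, Finset.mem_univ, true_and]
    constructor
    · rintro ⟨i, rfl⟩; exact ⟨i, hφm i⟩
    · rintro ⟨i, hm⟩; exact ⟨i, ematch_unique (hφm i) hm⟩
  set i₀ : Fin ℓ := ⟨0, by omega⟩ with hi₀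
  set e₀ := φ i₀ with he₀
  have hfirst : ∀ e, isFirst v e ↔ e = e₀ := by
    intro e
    constructor
    · rintro ⟨i, hi0, hm⟩
      have hii : i = i₀ := Fin.ext hi0
      rw [hii] at hm
      exact ematch_unique hm (hφm i₀)
    · rintro rfl; exact ⟨i₀, rfl, hφm i₀⟩
  have hfact : jpr p ε (Ev v)
      = ∏ e : EdgeIdx n, ∑ z : Bool × Bool,
          if EvP v e z.1 z.2 then cwt p ε z.1 z.2 else 0 :=
    jpr_forall p ε (fun e x y => EvP v e x y)
  rw [hfact]
  have hS_nonneg : ∀ e : EdgeIdx n,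
      0 ≤ ∑ z : Bool × Bool, if EvP v e z.1 z.2 then cwt p ε z.1 z.2 else 0 := by
    intro e
    apply Finset.sum_nonneg
    intro z _
    split
    · exact cwt_nonneg hp0 hp1 he0 he1 _ _
    · exact le_refl 0
  have hbound : ∀ e : EdgeIdx n,
      (∑ z : Bool × Bool, if EvP v e z.1 z.2 then cwt p ε z.1 z.2 else 0)
        ≤ (if e = e₀ then 2*ε*p else if e ∈ T then p*(1+ε) else 1) := by
    intro e
    by_cases h1 : e = e₀
    · rw [if_pos h1]
      have step : (∑ z : Bool × Bool, if EvP v e z.1 z.2 then cwt p ε z.1 z.2 else 0)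
          ≤ ∑ z : Bool × Bool, if z.1 ≠ z.2 then cwt p ε z.1 z.2 else 0 := by
        apply Finset.sum_le_sum
        intro z _
        by_cases hz : EvP v e z.1 z.2
        · rw [if_pos hz, if_pos (hz.2 ((hfirst e).mpr h1))]
        · rw [if_neg hz]
          split
          · exact cwt_nonneg hp0 hp1 he0 he1 _ _
          · exact le_refl 0
      calc (∑ z : Bool × Bool, if EvP v e z.1 z.2 then cwt p ε z.1 z.2 else 0)
          ≤ ∑ z : Bool × Bool, if z.1 ≠ z.2 then cwt p ε z.1 z.2 else 0 := step
        _ = 2*ε*p*(1-p) := sum_cwt_diff p ε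
        _ ≤ 2*ε*p := by nlinarith [mul_nonneg (mul_nonneg he0 hp0) hp0]
    · rw [if_neg h1]
      by_cases h2 : e ∈ T
      · rw [if_pos h2]
        have step : (∑ z : Bool × Bool, if EvP v e z.1 z.2 then cwt p ε z.1 z.2 else 0)
            ≤ ∑ z : Bool × Bool, if (z.1 || z.2) = true then cwt p ε z.1 z.2 else 0 := by
          apply Finset.sum_le_sum
          intro z _
          by_cases hz : EvP v e z.1 z.2
          · rw [if_pos hz, if_pos (hz.1 ((hT e).mp h2))]
          · rw [if_neg hz]
            split
            · exact cwt_nonneg hp0 hp1 he0 he1 _ _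
            · exact le_refl 0
        calc (∑ z : Bool × Bool, if EvP v e z.1 z.2 then cwt p ε z.1 z.2 else 0)
            ≤ ∑ z : Bool × Bool, if (z.1 || z.2) = true then cwt p ε z.1 z.2 else 0 := step
          _ = p + ε*p*(1-p) := sum_cwt_or p ε
          _ ≤ p*(1+ε) := by nlinarith [mul_nonneg (mul_nonneg he0 hp0) hp0]
      · rw [if_neg h2]
        have step : (∑ z : Bool × Bool, if EvP v e z.1 z.2 then cwt p ε z.1 z.2 else 0)
            ≤ ∑ z : Bool × Bool, cwt p ε z.1 z.2 := by
          apply Finset.sum_le_sum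
          intro z _
          split
          · exact le_refl _
          · exact cwt_nonneg hp0 hp1 he0 he1 _ _
        calc (∑ z : Bool × Bool, if EvP v e z.1 z.2 then cwt p ε z.1 z.2 else 0)
            ≤ ∑ z : Bool × Bool, cwt p ε z.1 z.2 := step
          _ = 1 := sum_cwt p ε
  have hprod : (∏ e : EdgeIdx n, ∑ z : Bool × Bool,
        if EvP v e z.1 z.2 then cwt p ε z.1 z.2 else 0)
      ≤ ∏ e : EdgeIdx n, (if e = e₀ then 2*ε*p else if e ∈ T then p*(1+ε) else 1) :=
    Finset.prod_le_prod (fun e _ => hS_nonneg e) (fun e _ => hbound e)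
  have he₀T : e₀ ∈ T := by
    rw [hTdef, he₀]
    exact Finset.mem_image_of_mem φ (Finset.mem_univ i₀)
  have hcardT : T.card = ℓ := by
    rw [hTdef, Finset.card_image_of_injective _ hφinj, Finset.card_univ, Fintype.card_fin]
  have hprodeq : (∏ e : EdgeIdx n, (if e = e₀ then 2*ε*p else if e ∈ T then p*(1+ε) else 1))
      = 2*ε*p * (p*(1+ε))^(ℓ-1) := by
    rw [← Finset.prod_subset (Finset.subset_univ T) (fun e _ he => by
      rw [if_neg (fun h => he (by rw [h]; exact he₀T)), if_neg he])]
    rw [← Finset.mul_prod_erase T _ he₀T, if_pos rfl]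
    congr 1
    rw [Finset.prod_congr rfl (fun e he => ?_), Finset.prod_const,
      Finset.card_erase_of_mem he₀T, hcardT]
    rw [if_neg (Finset.ne_of_mem_erase he), if_pos (Finset.mem_of_mem_erase he)]
  have hfin : 2*ε*p * (p*(1+ε))^(ℓ-1) ≤ 2 * ε * (p * (1 + ε)) ^ ℓ := by
    have hA : (0:ℝ) ≤ (p*(1+ε))^(ℓ-1) := pow_nonneg (by nlinarith) _
    have hsucc : (p * (1+ε))^ℓ = (p*(1+ε))^(ℓ-1) * (p*(1+ε)) := by
      rw [← pow_succ]
      congr 1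
      omega
    rw [hsucc]
    nlinarith [mul_nonneg (mul_nonneg he0 he0) (mul_nonneg hp0 hA), mul_nonneg (mul_nonneg he0 hp0) hA]
  calc (∏ e : EdgeIdx n, ∑ z : Bool × Bool,
        if EvP v e z.1 z.2 then cwt p ε z.1 z.2 else 0)
      ≤ ∏ e : EdgeIdx n, (if e = e₀ then 2*ε*p else if e ∈ T then p*(1+ε) else 1) := hprod
    _ = 2*ε*p * (p*(1+ε))^(ℓ-1) := hprodeq
    _ ≤ 2 * ε * (p * (1 + ε)) ^ ℓ := hfin


end AuxEvent

/-- Indicator that the graph encoded by `ω` contains a cycle of length `ℓ` for some integer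
`ℓ ∈ (a·n^{1/3}, b·n^{1/3})`. -/
noncomputable def cycleInd (a b : ℝ) (n : ℕ) (ω : EdgeIdx n → Bool) : Bool :=
  bOf (∃ ℓ : ℕ, a * (n : ℝ) ^ ((1 : ℝ)/3) < (ℓ : ℝ) ∧ (ℓ : ℝ) < b * (n : ℝ) ^ ((1 : ℝ)/3) ∧
    hasCycleOfLength (graphOf ω) ℓ)

section AuxExtract

lemma bOf_eq_false {P : Prop} : bOf P = false ↔ ¬ P := by
  simp [bOf]

lemma extract_tf {n : ℕ} {a b : ℝ} {ω τ : EdgeIdx n → Bool}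
    (h1 : cycleInd a b n ω = true) (h2 : cycleInd a b n τ = false) :
    ∃ ℓ : ℕ, 3 ≤ ℓ ∧ (ℓ : ℝ) < b * (n : ℝ) ^ ((1 : ℝ)/3) ∧
      ∃ v : Fin ℓ → Fin n, Function.Injective v ∧ (ω, τ) ∈ Ev v := by
  rw [cycleInd, bOf_eq_true] at h1
  rw [cycleInd, bOf_eq_false] at h2
  obtain ⟨ℓ, hla, hlb, x, c, hc, hlen⟩ := h1
  have hno : ¬ hasCycleOfLength (graphOf τ) ℓ := fun hcy => h2 ⟨ℓ, hla, hlb, hcy⟩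
  subst hlen
  obtain ⟨v, hv, hEv⟩ := extract_side hc hno
  exact ⟨c.length, hc.three_le_length, hlb, v, hv, hEv⟩

lemma extract {n : ℕ} {a b : ℝ} {q : (EdgeIdx n → Bool) × (EdgeIdx n → Bool)}
    (h : cycleInd a b n q.1 ≠ cycleInd a b n q.2) :
    ∃ ℓ : ℕ, 3 ≤ ℓ ∧ (ℓ : ℝ) < b * (n : ℝ) ^ ((1 : ℝ)/3) ∧
      ∃ v : Fin ℓ → Fin n, Function.Injective v ∧ q ∈ Ev v := by
  rcases Bool.eq_false_or_eq_true (cycleInd a b n q.1) with hq1 | hq1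
  all_goals rcases Bool.eq_false_or_eq_true (cycleInd a b n q.2) with hq2 | hq2
  · rw [hq1, hq2] at h; exact absurd rfl h
  · obtain ⟨ℓ, h3, hlb, v, hv, hEv⟩ := extract_tf hq1 hq2
    exact ⟨ℓ, h3, hlb, v, hv, hEv⟩
  · obtain ⟨ℓ, h3, hlb, v, hv, hEv⟩ := extract_tf hq2 hq1
    exact ⟨ℓ, h3, hlb, v, hv, Ev_symm hEv⟩
  · rw [hq1, hq2] at h; exact absurd rfl h

end AuxExtract

/-- At criticality `n·p = 1 + O(n^{-1/3})`, if `ε(n)·n^{1/3} → 0` then the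
property of containing a cycle of length in `(a n^{1/3}, b n^{1/3})` is noise stable w.r.t.
`ε(n)`: the probability that `f_n(ω^{ε(n)}) ≠ f_n(ω)` tends to `0`. -/
theorem stmt1 (a b : ℝ) (ha : 0 < a) (hab : a < b)
    (p : ℕ → ℝ) (hp : ∀ n, p n ∈ Set.Ioo (0 : ℝ) 1)
    (hcrit : ∃ C : ℝ, ∀ᶠ n : ℕ in atTop,
      |(n : ℝ) * p n - 1| ≤ C * (n : ℝ) ^ (-(1 : ℝ)/3))
    (ε : ℕ → ℝ) (hε : ∀ n, ε n ∈ Set.Ioo (0 : ℝ) 1)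
    (hsmall : Tendsto (fun n => ε n * (n : ℝ) ^ ((1 : ℝ)/3)) atTop (nhds 0)) :
    Tendsto (fun n => disagree (p n) (ε n) (cycleInd a b n)) atTop (nhds 0) := by
  classical
  have hb : 0 < b := ha.trans hab
  obtain ⟨C₀, hC₀⟩ := hcrit
  set C := |C₀| with hCdef
  have hC0 : 0 ≤ C := abs_nonneg C₀
  have hC : ∀ᶠ n : ℕ in atTop, |(n : ℝ) * p n - 1| ≤ C * (n : ℝ) ^ (-(1 : ℝ)/3) :=
    hC₀.mono fun n h => h.trans (mul_le_mul_of_nonneg_right (le_abs_self C₀)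
      (Real.rpow_nonneg (Nat.cast_nonneg n) _))
  set K := Real.exp (C * b + 2 * b) with hKdef
  have hK0 : 0 ≤ K := (Real.exp_pos _).le
  have hεsmall : ∀ᶠ n : ℕ in atTop, ε n * (n : ℝ) ^ ((1 : ℝ)/3) ≤ 1 :=
    (hsmall.eventually (gt_mem_nhds (show (0:ℝ) < 1 by norm_num))).mono fun n h => h.le
  have hCev : ∀ᶠ n : ℕ in atTop, C * (n : ℝ) ^ (-(1 : ℝ)/3) ≤ 1 := by
    have hrp : Tendsto (fun n : ℕ => (n : ℝ) ^ (-(1 : ℝ)/3)) atTop (nhds 0) := by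
      have h1 : Tendsto (fun x : ℝ => x ^ (-(1 : ℝ)/3)) atTop (nhds 0) := by
        have := tendsto_rpow_neg_atTop (show (0:ℝ) < 1/3 by norm_num)
        simpa [neg_div] using this
      exact h1.comp tendsto_natCast_atTop_atTop
    have h2 : Tendsto (fun n : ℕ => C * (n : ℝ) ^ (-(1 : ℝ)/3)) atTop (nhds 0) := by
      simpa using hrp.const_mul C
    exact (h2.eventually (gt_mem_nhds (show (0:ℝ) < 1 by norm_num))).mono fun n h => h.le
  apply squeeze_zero' (g := fun n => (2 * K * b) * (ε n * (n : ℝ) ^ ((1 : ℝ)/3)))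
  · exact Eventually.of_forall fun n =>
      jpr_nonneg (hp n).1.le (hp n).2.le (hε n).1.le (hε n).2.le _
  · filter_upwards [hC, hεsmall, hCev, eventually_ge_atTop 1] with n hC1 hε1 hC2 hn1
    have hp0 : (0:ℝ) ≤ p n := (hp n).1.le
    have hp1 : p n ≤ 1 := (hp n).2.le
    have he0 : (0:ℝ) ≤ ε n := (hε n).1.le
    have he1 : ε n ≤ 1 := (hε n).2.le
    have hnpos : (0:ℝ) < (n : ℝ) := by exact_mod_cast hn1
    have hX0 : (0:ℝ) ≤ (n : ℝ) ^ ((1 : ℝ)/3) := Real.rpow_nonneg hnpos.le _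
    have hbpos : (0:ℝ) ≤ b * (n : ℝ) ^ ((1 : ℝ)/3) := mul_nonneg hb.le hX0
    set L := ⌊b * (n : ℝ) ^ ((1 : ℝ)/3)⌋₊ with hLdef
    set s := (Finset.Icc 3 L).sigma
      (fun ℓ => Finset.univ.filter (fun v : Fin ℓ → Fin n => Function.Injective v)) with hs
    have h1 : disagree (p n) (ε n) (cycleInd a b n)
        ≤ ∑ t ∈ s, jpr (p n) (ε n) (Ev t.2) := by
      apply jpr_le_sum hp0 hp1 he0 he1
      intro q hq
      obtain ⟨ℓ, h3, hlb, v, hv, hEv⟩ := extract hq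
      refine ⟨⟨ℓ, v⟩, ?_, hEv⟩
      rw [hs, Finset.mem_sigma]
      exact ⟨Finset.mem_Icc.mpr ⟨h3, Nat.le_floor hlb.le⟩,
        Finset.mem_filter.mpr ⟨Finset.mem_univ _, hv⟩⟩
    have h2 : ∑ t ∈ s, jpr (p n) (ε n) (Ev t.2)
        ≤ ∑ ℓ ∈ Finset.Icc 3 L, (n:ℝ)^ℓ * (2 * ε n * (p n * (1 + ε n))^ℓ) := by
      rw [hs, Finset.sum_sigma]
      apply Finset.sum_le_sum
      intro ℓ hℓmem
      have h3ℓ : 3 ≤ ℓ := (Finset.mem_Icc.mp hℓmem).1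
      have hterm : ∀ v ∈ Finset.univ.filter (fun v : Fin ℓ → Fin n => Function.Injective v),
          jpr (p n) (ε n) (Ev v) ≤ 2 * ε n * (p n * (1 + ε n))^ℓ := fun v hvm =>
        jpr_Ev_le h3ℓ (Finset.mem_filter.mp hvm).2 hp0 hp1 he0 he1
      have hB0 : (0:ℝ) ≤ 2 * ε n * (p n * (1 + ε n))^ℓ := by positivity
      calc ∑ v ∈ Finset.univ.filter (fun v : Fin ℓ → Fin n => Function.Injective v),
            jpr (p n) (ε n) (Ev v)
          ≤ (Finset.univ.filter (fun v : Fin ℓ → Fin n => Function.Injective v)).card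
              • (2 * ε n * (p n * (1 + ε n))^ℓ) := Finset.sum_le_card_nsmul _ _ _ hterm
        _ = ((Finset.univ.filter (fun v : Fin ℓ → Fin n => Function.Injective v)).card : ℝ)
              * (2 * ε n * (p n * (1 + ε n))^ℓ) := nsmul_eq_mul _ _
        _ ≤ (n:ℝ)^ℓ * (2 * ε n * (p n * (1 + ε n))^ℓ) := by
            apply mul_le_mul_of_nonneg_right _ hB0
            have hcard : (Finset.univ.filter
                (fun v : Fin ℓ → Fin n => Function.Injective v)).card ≤ n ^ ℓ := by
              refine le_trans (Finset.card_filter_le _ _) ?_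
              rw [Finset.card_univ]
              rw [Fintype.card_fun]
              simp
            calc ((Finset.univ.filter
                (fun v : Fin ℓ → Fin n => Function.Injective v)).card : ℝ)
                ≤ ((n ^ ℓ : ℕ) : ℝ) := Nat.cast_le.mpr hcard
              _ = (n:ℝ)^ℓ := by push_cast; ring
    set δ := C * (n:ℝ)^(-(1:ℝ)/3) + 2 * ε n with hδdef
    have hδ0 : 0 ≤ δ := by
      have h0 : (0:ℝ) ≤ C * (n:ℝ)^(-(1:ℝ)/3) :=
        mul_nonneg hC0 (Real.rpow_nonneg hnpos.le _)
      rw [hδdef]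
      linarith
    have hρ0 : (0:ℝ) ≤ (n:ℝ) * (p n * (1 + ε n)) := by positivity
    have hρ : (n:ℝ) * (p n * (1 + ε n)) ≤ 1 + δ := by
      have hnp : (n:ℝ) * p n ≤ 1 + C * (n:ℝ)^(-(1:ℝ)/3) := by
        have := abs_le.mp hC1
        linarith [this.2]
      have hnp0 : (0:ℝ) ≤ (n:ℝ) * p n := mul_nonneg hnpos.le hp0
      have hm1 : ((n:ℝ) * p n) * ε n ≤ (1 + C * (n:ℝ)^(-(1:ℝ)/3)) * ε n :=
        mul_le_mul_of_nonneg_right hnp he0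
      have hm2 : (C * (n:ℝ)^(-(1:ℝ)/3)) * ε n ≤ 1 * ε n :=
        mul_le_mul_of_nonneg_right hC2 he0
      rw [hδdef]
      nlinarith [hm1, hm2, hnp]
    have hXX : (n:ℝ)^(-(1:ℝ)/3) * (n:ℝ)^((1:ℝ)/3) = 1 := by
      rw [← Real.rpow_add hnpos]
      norm_num
    have hLreal : (L:ℝ) ≤ b * (n:ℝ)^((1:ℝ)/3) := Nat.floor_le hbpos
    have hK : ∀ ℓ ∈ Finset.Icc 3 L, ((n:ℝ) * (p n * (1 + ε n)))^ℓ ≤ K := by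
      intro ℓ hm
      have hLle : ℓ ≤ L := (Finset.mem_Icc.mp hm).2
      calc ((n:ℝ) * (p n * (1 + ε n)))^ℓ ≤ (1 + δ)^ℓ := pow_le_pow_left₀ hρ0 hρ ℓ
        _ ≤ (1 + δ)^L := pow_le_pow_right₀ (by linarith) hLle
        _ ≤ (Real.exp δ)^L := pow_le_pow_left₀ (by linarith)
            (by linarith [Real.add_one_le_exp δ]) L
        _ = Real.exp (δ * L) := by
            rw [← Real.exp_nat_mul]
            ring_nf
        _ ≤ K := by
            rw [hKdef]
            apply Real.exp_le_exp.mpr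
            calc δ * L ≤ δ * (b * (n:ℝ)^((1:ℝ)/3)) :=
                mul_le_mul_of_nonneg_left hLreal hδ0
              _ = C * b * ((n:ℝ)^(-(1:ℝ)/3) * (n:ℝ)^((1:ℝ)/3))
                  + 2 * b * (ε n * (n:ℝ)^((1:ℝ)/3)) := by rw [hδdef]; ring
              _ = C * b + 2 * b * (ε n * (n:ℝ)^((1:ℝ)/3)) := by rw [hXX]; ring
              _ ≤ C * b + 2 * b := by nlinarith [hε1, hb.le]
    have h3 : ∑ ℓ ∈ Finset.Icc 3 L, (n:ℝ)^ℓ * (2 * ε n * (p n * (1 + ε n))^ℓ)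
        ≤ (2 * K * b) * (ε n * (n:ℝ)^((1:ℝ)/3)) := by
      have hterm : ∀ ℓ ∈ Finset.Icc 3 L,
          (n:ℝ)^ℓ * (2 * ε n * (p n * (1 + ε n))^ℓ) ≤ 2 * ε n * K := by
        intro ℓ hm
        have heq : (n:ℝ)^ℓ * (2 * ε n * (p n * (1 + ε n))^ℓ)
            = 2 * ε n * ((n:ℝ) * (p n * (1 + ε n)))^ℓ := by
          rw [show ((n:ℝ) * (p n * (1 + ε n)))^ℓ
              = (n:ℝ)^ℓ * (p n * (1 + ε n))^ℓ from mul_pow _ _ _]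
          ring
        rw [heq]
        have := hK ℓ hm
        nlinarith [this, he0, pow_nonneg hρ0 ℓ]
      have hcK : (0:ℝ) ≤ 2 * ε n * K := by positivity
      calc ∑ ℓ ∈ Finset.Icc 3 L, (n:ℝ)^ℓ * (2 * ε n * (p n * (1 + ε n))^ℓ)
          ≤ (Finset.Icc 3 L).card • (2 * ε n * K) := Finset.sum_le_card_nsmul _ _ _ hterm
        _ = ((Finset.Icc 3 L).card : ℝ) * (2 * ε n * K) := nsmul_eq_mul _ _
        _ ≤ (L:ℝ) * (2 * ε n * K) := by
            apply mul_le_mul_of_nonneg_right _ hcK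
            have : (Finset.Icc 3 L).card ≤ L := by rw [Nat.card_Icc]; omega
            exact_mod_cast this
        _ ≤ (b * (n:ℝ)^((1:ℝ)/3)) * (2 * ε n * K) :=
            mul_le_mul_of_nonneg_right hLreal hcK
        _ = (2 * K * b) * (ε n * (n:ℝ)^((1:ℝ)/3)) := by ring
    exact le_trans h1 (le_trans h2 h3)
  · simpa using hsmall.const_mul (2 * K * b)


end BooleanNoise
end

section
/- Let (f_n) be a sequence of monotone increasing Boolean functions f_n : {0,1}^{Λ_n} → {0,1} with parameters p_n that is 1-witness-disjoint, i.e., lim_{n→∞} max_{W ∈ W_1(f_n)} P( ⋃_{W' ∈ W_1(f_n), W'≠W, W'∩W≠∅} {ω ≡ 1 on W'} | ω ≡ 1 on W ) = 0. Let ℓ_n denote the minimum size of a 1-witness of f_n, and let ε = ε(n) ∈ (0,1) satisfy ε(n)·(1−p_n)·ℓ_n → ∞. Then (f_n) is 1-strongly noise sensitive w.r.t. ε(n). -/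
open Finset Filter

namespace BooleanNoise

/-- `max_{W ∈ W₁(f)} P(⋃_{W' ∈ W₁(f), W' ≠ W, W' ∩ W ≠ ∅} {ω ≡ 1 on W'} ∣ ω ≡ 1 on W)`:
the quantity whose vanishing defines 1-witness-disjointness. -/
noncomputable def overlapGap {Λ : Type*} [Fintype Λ] [DecidableEq Λ]
    (p : ℝ) (f : (Λ → Bool) → Bool) : ℝ :=
  ⨆ W : {W : Finset Λ // IsOneWitness f W},
    pr p {ω | (∃ W' : Finset Λ, IsOneWitness f W' ∧ W' ≠ W.1 ∧ (W' ∩ W.1).Nonempty ∧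
                ∀ i ∈ W', ω i = true) ∧
              ∀ i ∈ W.1, ω i = true}
      / pr p {ω | ∀ i ∈ W.1, ω i = true}


section Aux

open Classical in
theorem tauto_placeholder : True := trivial

variable {Λ : Type*} [Fintype Λ] [DecidableEq Λ]

/-- Generalized product weight with per-coordinate weights. -/
def genWt (w : Λ → Bool → ℝ) (ω : Λ → Bool) : ℝ := ∏ i, w i (ω i)

/-- Probability of an event under a general product measure. -/
noncomputable def genPr (w : Λ → Bool → ℝ) (A : Set (Λ → Bool)) : ℝ :=
  ∑ ω : Λ → Bool, A.indicator (genWt w) ω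

lemma sum_prod_bool (h : Λ → Bool → ℝ) :
    ∑ ω : Λ → Bool, ∏ i, h i (ω i) = ∏ i, (h i true + h i false) := by
  have := Finset.prod_univ_sum (fun _ : Λ => (Finset.univ : Finset Bool)) (fun i b => h i b)
  rw [Fintype.piFinset_univ] at this
  rw [← this]
  exact Finset.prod_congr rfl (fun i _ => by rw [Fintype.sum_bool])

lemma genWt_nonneg {w : Λ → Bool → ℝ} (hw : ∀ i b, 0 ≤ w i b) (ω : Λ → Bool) :
    0 ≤ genWt w ω :=
  Finset.prod_nonneg fun i _ => hw i (ω i)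

lemma genPr_nonneg {w : Λ → Bool → ℝ} (hw : ∀ i b, 0 ≤ w i b) (A : Set (Λ → Bool)) :
    0 ≤ genPr w A :=
  Finset.sum_nonneg fun ω _ => Set.indicator_nonneg (fun x _ => genWt_nonneg hw x) ω

lemma genPr_mono {w : Λ → Bool → ℝ} (hw : ∀ i b, 0 ≤ w i b) {A B : Set (Λ → Bool)}
    (hAB : A ⊆ B) : genPr w A ≤ genPr w B :=
  Finset.sum_le_sum fun ω _ =>
    Set.indicator_le_indicator_of_subset hAB (fun x => genWt_nonneg hw x) ω

lemma genPr_union_le {w : Λ → Bool → ℝ} (hw : ∀ i b, 0 ≤ w i b) (A B : Set (Λ → Bool)) :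
    genPr w (A ∪ B) ≤ genPr w A + genPr w B := by
  classical
  unfold genPr
  rw [← Finset.sum_add_distrib]
  refine Finset.sum_le_sum fun ω _ => ?_
  by_cases hA : ω ∈ A
  · rw [Set.indicator_of_mem (Set.mem_union_left _ hA), Set.indicator_of_mem hA]
    have := Set.indicator_nonneg (fun x (_ : x ∈ B) => genWt_nonneg hw x) ω
    linarith
  · by_cases hB : ω ∈ B
    · rw [Set.indicator_of_mem (Set.mem_union_right _ hB), Set.indicator_of_notMem hA,
        Set.indicator_of_mem hB]
      linarith [genWt_nonneg hw ω]
    · rw [Set.indicator_of_notMem (by simp [hA, hB] : ω ∉ A ∪ B),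
        Set.indicator_of_notMem hA, Set.indicator_of_notMem hB]
      linarith

/-- The key product-event computation. -/
lemma genPr_ones {w : Λ → Bool → ℝ} (hw1 : ∀ i, w i true + w i false = 1) (W : Finset Λ) :
    genPr w {ω | ∀ i ∈ W, ω i = true} = ∏ i ∈ W, w i true := by
  classical
  unfold genPr
  have key : ∀ ω : Λ → Bool,
      ({ω : Λ → Bool | ∀ i ∈ W, ω i = true}).indicator (genWt w) ω
        = ∏ i, (if i ∈ W then (if ω i then w i true else 0) else w i (ω i)) := by
    intro ω
    by_cases h : ω ∈ {ω : Λ → Bool | ∀ i ∈ W, ω i = true}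
    · rw [Set.indicator_of_mem h]
      refine Finset.prod_congr rfl fun i _ => ?_
      by_cases hi : i ∈ W
      · simp [hi, h i hi]
      · simp [hi]
    · rw [Set.indicator_of_notMem h]
      have : ∃ i ∈ W, ω i = false := by
        simp only [Set.mem_setOf_eq, not_forall] at h
        obtain ⟨i, hi, hfi⟩ := h
        exact ⟨i, hi, by simpa using hfi⟩
      obtain ⟨i, hiW, hif⟩ := this
      rw [eq_comm]
      refine Finset.prod_eq_zero (Finset.mem_univ i) ?_
      simp [hiW, hif]
  rw [Finset.sum_congr rfl (fun ω _ => key ω)]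
  rw [show (∑ ω : Λ → Bool, ∏ i, (if i ∈ W then (if ω i then w i true else 0) else w i (ω i)))
      = ∏ i, ((if i ∈ W then (if true then w i true else 0) else w i true)
          + (if i ∈ W then (if false then w i true else 0) else w i false)) from
    sum_prod_bool (fun i b => if i ∈ W then (if b then w i true else 0) else w i b)]
  have : ∀ i : Λ, ((if i ∈ W then (if true then w i true else 0) else w i true)
      + (if i ∈ W then (if false then w i true else 0) else w i false))
      = if i ∈ W then w i true else 1 := by
    intro i; by_cases hi : i ∈ W <;> simp [hi, hw1 i]
  rw [Finset.prod_congr rfl (fun i _ => this i), Finset.prod_ite_mem, Finset.univ_inter]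

lemma genPr_univ {w : Λ → Bool → ℝ} (hw1 : ∀ i, w i true + w i false = 1) :
    genPr w Set.univ = 1 := by
  unfold genPr
  rw [Set.indicator_univ]
  unfold genWt
  rw [sum_prod_bool]
  exact Finset.prod_eq_one fun i _ => hw1 i

/-- An event closed under raising a bit to `true`. -/
def UpClosed (A : Set (Λ → Bool)) : Prop :=
  ∀ ω : Λ → Bool, ∀ i : Λ, ω ∈ A → Function.update ω i true ∈ A

lemma sum_pair (F : (Λ → Bool) → ℝ) (i : Λ) :
    ∑ ω : Λ → Bool, F ω
      = ∑ ω ∈ Finset.univ.filter (fun ω : Λ → Bool => ω i = true),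
          (F ω + F (Function.update ω i false)) := by
  classical
  rw [Finset.sum_add_distrib]
  rw [← Finset.sum_filter_add_sum_filter_not Finset.univ (fun ω : Λ → Bool => ω i = true) F]
  congr 1
  refine Finset.sum_nbij' (fun ω => Function.update ω i true)
    (fun ω => Function.update ω i false) ?_ ?_ ?_ ?_ ?_
  · intro ω hω; simp
  · intro ω hω; simp
  · intro ω hω
    simp only [Finset.mem_filter, Finset.mem_univ, true_and, Bool.not_eq_true] at hω
    simp only [Function.update_idem]
    rw [← hω, Function.update_eq_self]
  · intro ω hω
    simp only [Finset.mem_filter, Finset.mem_univ, true_and] at hω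
    simp only [Function.update_idem]
    rw [← hω, Function.update_eq_self]
  · intro ω hω
    simp only [Finset.mem_filter, Finset.mem_univ, true_and, Bool.not_eq_true] at hω
    simp only [Function.update_idem]
    rw [← hω, Function.update_eq_self]

end Aux

section Aux2
set_option linter.unusedSectionVars false

variable {Λ : Type*} [Fintype Λ] [DecidableEq Λ]

lemma genWt_factor (w : Λ → Bool → ℝ) (ω : Λ → Bool) (i : Λ) :
    genWt w ω = w i (ω i) * ∏ j ∈ Finset.univ.erase i, w j (ω j) := by
  rw [genWt, ← Finset.mul_prod_erase Finset.univ _ (Finset.mem_univ i)]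

lemma genWt_update_pt (w : Λ → Bool → ℝ) (ω : Λ → Bool) (i : Λ) (b : Bool) :
    genWt w (Function.update ω i b)
      = w i b * ∏ j ∈ Finset.univ.erase i, w j (ω j) := by
  rw [genWt_factor w _ i, Function.update_self]
  congr 1
  refine Finset.prod_congr rfl fun j hj => ?_
  rw [Function.update_of_ne (Finset.ne_of_mem_erase hj)]

lemma genWt_update_wt (w : Λ → Bool → ℝ) (v : Bool → ℝ) (ω : Λ → Bool) (i : Λ) :
    genWt (Function.update w i v) ω
      = v (ω i) * ∏ j ∈ Finset.univ.erase i, w j (ω j) := by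
  rw [genWt_factor _ ω i, Function.update_self]
  congr 1
  refine Finset.prod_congr rfl fun j hj => ?_
  rw [Function.update_of_ne (Finset.ne_of_mem_erase hj)]

lemma genWt_update_wt_pt (w : Λ → Bool → ℝ) (v : Bool → ℝ) (ω : Λ → Bool) (i : Λ) (b : Bool) :
    genWt (Function.update w i v) (Function.update ω i b)
      = v b * ∏ j ∈ Finset.univ.erase i, w j (ω j) := by
  rw [genWt_update_wt]
  rw [Function.update_self]
  congr 1
  refine Finset.prod_congr rfl fun j hj => ?_
  rw [Function.update_of_ne (Finset.ne_of_mem_erase hj)]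

open Classical in
lemma indicator_pt {A : Set (Λ → Bool)} (g : (Λ → Bool) → ℝ) (ω : Λ → Bool) :
    A.indicator g ω = (if ω ∈ A then (1:ℝ) else 0) * g ω := by
  by_cases h : ω ∈ A
  · rw [Set.indicator_of_mem h, if_pos h, one_mul]
  · rw [Set.indicator_of_notMem h, if_neg h, zero_mul]

lemma genPr_update_le (w : Λ → Bool → ℝ) (i : Λ) (v : Bool → ℝ)
    (hw : ∀ j b, 0 ≤ w j b) (hv0 : 0 ≤ v false)
    (hsum : w i true + w i false = v true + v false)
    (hle : w i true ≤ v true)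
    {A : Set (Λ → Bool)} (hA : UpClosed A) :
    genPr w A ≤ genPr (Function.update w i v) A := by
  classical
  unfold genPr
  rw [sum_pair (fun ω => A.indicator (genWt w) ω) i,
    sum_pair (fun ω => A.indicator (genWt (Function.update w i v)) ω) i]
  refine Finset.sum_le_sum fun ω hω => ?_
  simp only [Finset.mem_filter, Finset.mem_univ, true_and] at hω
  set R : ℝ := ∏ j ∈ Finset.univ.erase i, w j (ω j) with hR
  have hR0 : 0 ≤ R := Finset.prod_nonneg fun j _ => hw j (ω j)
  set a : ℝ := if ω ∈ A then (1:ℝ) else 0 with ha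
  set b : ℝ := if Function.update ω i false ∈ A then (1:ℝ) else 0 with hb
  have hba : b ≤ a := by
    rw [ha, hb]
    by_cases h : Function.update ω i false ∈ A
    · have := hA _ i h
      rw [Function.update_idem] at this
      rw [← hω, Function.update_eq_self] at this
      rw [if_pos h, if_pos this]
    · by_cases h2 : ω ∈ A <;> simp [h, h2]
  have ha0 : 0 ≤ a := by rw [ha]; by_cases h : ω ∈ A <;> simp [h]
  have hb0 : 0 ≤ b := by rw [hb]; by_cases h : Function.update ω i false ∈ A <;> simp [h]
  have e1 : A.indicator (genWt w) ω = a * (w i true * R) := by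
    rw [indicator_pt, genWt_factor w ω i, hω]
  have e2 : A.indicator (genWt w) (Function.update ω i false) = b * (w i false * R) := by
    rw [indicator_pt, genWt_update_pt]
  have e3 : A.indicator (genWt (Function.update w i v)) ω = a * (v true * R) := by
    rw [indicator_pt, genWt_update_wt, hω]
  have e4 : A.indicator (genWt (Function.update w i v)) (Function.update ω i false)
      = b * (v false * R) := by
    rw [indicator_pt, genWt_update_wt_pt]
  rw [e1, e2, e3, e4]
  have key : a * (v true * R) + b * (v false * R)
      - (a * (w i true * R) + b * (w i false * R))
      = (a - b) * (v true - w i true) * R := by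
    linear_combination (-(b * R)) * hsum
  linarith [mul_nonneg (mul_nonneg (sub_nonneg.2 hba) (sub_nonneg.2 hle)) hR0, key]

lemma genPr_update_eq (w : Λ → Bool → ℝ) (i : Λ) (v : Bool → ℝ)
    (hsum : w i true + w i false = v true + v false)
    {A : Set (Λ → Bool)} (hA : ∀ ω b, Function.update ω i b ∈ A ↔ ω ∈ A) :
    genPr w A = genPr (Function.update w i v) A := by
  classical
  unfold genPr
  rw [sum_pair (fun ω => A.indicator (genWt w) ω) i,
    sum_pair (fun ω => A.indicator (genWt (Function.update w i v)) ω) i]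
  refine Finset.sum_congr rfl fun ω hω => ?_
  simp only [Finset.mem_filter, Finset.mem_univ, true_and] at hω
  set R : ℝ := ∏ j ∈ Finset.univ.erase i, w j (ω j) with hR
  set a : ℝ := if ω ∈ A then (1:ℝ) else 0 with ha
  have hba : (if Function.update ω i false ∈ A then (1:ℝ) else 0) = a := by
    rw [ha]
    by_cases h : ω ∈ A <;> simp [hA ω false, h]
  have e1 : A.indicator (genWt w) ω = a * (w i true * R) := by
    rw [indicator_pt, genWt_factor w ω i, hω]
  have e2 : A.indicator (genWt w) (Function.update ω i false) = a * (w i false * R) := by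
    rw [indicator_pt, genWt_update_pt, hba]
  have e3 : A.indicator (genWt (Function.update w i v)) ω = a * (v true * R) := by
    rw [indicator_pt, genWt_update_wt, hω]
  have e4 : A.indicator (genWt (Function.update w i v)) (Function.update ω i false)
      = a * (v false * R) := by
    rw [indicator_pt, genWt_update_wt_pt, hba]
  rw [e1, e2, e3, e4]
  linear_combination (a * R) * hsum

/-- Monotone comparison of product measures on an up-closed event. -/
lemma genPr_le_genPr (w w' : Λ → Bool → ℝ)
    (hw : ∀ j b, 0 ≤ w j b) (hw' : ∀ j b, 0 ≤ w' j b)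
    (hsum : ∀ i, w i true + w i false = w' i true + w' i false)
    (hle : ∀ i, w i true ≤ w' i true)
    {A : Set (Λ → Bool)} (hA : UpClosed A) :
    genPr w A ≤ genPr w' A := by
  classical
  have key : ∀ S : Finset Λ,
      genPr w A ≤ genPr (fun j => if j ∈ S then w' j else w j) A := by
    intro S
    induction S using Finset.induction_on with
    | empty => simp
    | @insert i S hiS ih =>
      have hpw : ∀ j b, 0 ≤ (fun j => if j ∈ S then w' j else w j) j b := by
        intro j b; by_cases h : j ∈ S <;> simp [h, hw j b, hw' j b]
      have step := genPr_update_le (fun j => if j ∈ S then w' j else w j) i (w' i)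
        hpw (hw' i false) (by simp [hiS, hsum i]) (by simp [hiS, hle i]) hA
      refine le_trans (le_trans ih step) (le_of_eq ?_)
      congr 1
      funext j
      by_cases hj : j = i
      · subst hj; simp [Function.update_self]
      · rw [Function.update_of_ne hj]
        by_cases hjS : j ∈ S <;> simp [hjS, hj, Finset.mem_insert]
  have := key Finset.univ
  simpa using this

/-- Changing weights on coordinates that the event does not depend on. -/
lemma genPr_eq_genPr (w w' : Λ → Bool → ℝ) (T : Finset Λ)
    (hagree : ∀ j ∉ T, w j = w' j)
    (hsum : ∀ i ∈ T, w i true + w i false = w' i true + w' i false)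
    {A : Set (Λ → Bool)} (hA : ∀ i ∈ T, ∀ (ω : Λ → Bool) (b : Bool),
      Function.update ω i b ∈ A ↔ ω ∈ A) :
    genPr w A = genPr w' A := by
  classical
  have key : ∀ S : Finset Λ, S ⊆ T →
      genPr w A = genPr (fun j => if j ∈ S then w' j else w j) A := by
    intro S
    induction S using Finset.induction_on with
    | empty => intro _; simp
    | @insert i S hiS ih =>
      intro hsub
      have hiT : i ∈ T := hsub (Finset.mem_insert_self i S)
      have hST : S ⊆ T := fun x hx => hsub (Finset.mem_insert_of_mem hx)
      have step := genPr_update_eq (fun j => if j ∈ S then w' j else w j) i (w' i)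
        (by simp [hiS, hsum i hiT]) (hA i hiT)
      rw [ih hST, step]
      congr 1
      funext j
      by_cases hj : j = i
      · subst hj; simp [Function.update_self]
      · rw [Function.update_of_ne hj]
        by_cases hjS : j ∈ S <;> simp [hjS, hj, Finset.mem_insert]
  have h1 := key T (subset_refl T)
  rw [h1]
  congr 1
  funext j
  by_cases hj : j ∈ T
  · simp [hj]
  · simp [hj, hagree j hj]

end Aux2

section Aux3
set_option linter.unusedSectionVars false

variable {Λ : Type*} [Fintype Λ] [DecidableEq Λ]

/-- Conditional single-coordinate weights for `ω^ε` given `ω ≡ 1` on `W`. -/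
noncomputable def condW (p ε : ℝ) (W : Finset Λ) : Λ → Bool → ℝ := fun i b =>
  if i ∈ W then (if b then 1 - ε * (1 - p) else ε * (1 - p)) else bern p b

lemma cwt_sum (p ε : ℝ) (y : Bool) :
    cwt p ε true y + cwt p ε false y = bern p y := by
  cases y <;> (unfold cwt bern; simp only [↓reduceIte]; push_cast; try ring)

lemma cwt_true (p ε : ℝ) (y : Bool) :
    cwt p ε true y = p * (if y then 1 - ε * (1 - p) else ε * (1 - p)) := by
  cases y <;> (unfold cwt bern; simp only [↓reduceIte]; push_cast; try ring)

lemma condW_sum (p ε : ℝ) (W : Finset Λ) (i : Λ) :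
    condW p ε W i true + condW p ε W i false = 1 := by
  by_cases h : i ∈ W <;> simp [condW, bern, h]

lemma condW_nonneg {p ε : ℝ} (hp : p ∈ Set.Ioo (0:ℝ) 1) (hε : ε ∈ Set.Ioo (0:ℝ) 1)
    (W : Finset Λ) (i : Λ) (b : Bool) : 0 ≤ condW p ε W i b := by
  obtain ⟨hp0, hp1⟩ := hp
  obtain ⟨hε0, hε1⟩ := hε
  have h1 : 0 ≤ ε * (1 - p) := by nlinarith
  have h2 : ε * (1 - p) ≤ 1 := by nlinarith
  by_cases h : i ∈ W <;> cases b <;> simp [condW, bern, h] <;> nlinarith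

lemma bern_nonneg_s15 {p : ℝ} (hp : p ∈ Set.Ioo (0:ℝ) 1) (b : Bool) : 0 ≤ bern p b := by
  obtain ⟨hp0, hp1⟩ := hp
  cases b <;> simp [bern] <;> linarith

/-- Marginalizing out the first coordinate of the pair. -/
lemma jpr_cond (p ε : ℝ) (W : Finset Λ) (E : Set (Λ → Bool)) :
    jpr p ε {q : (Λ → Bool) × (Λ → Bool) | q.2 ∈ E ∧ ∀ i ∈ W, q.1 i = true}
      = p ^ W.card * genPr (condW p ε W) E := by
  classical
  unfold jpr
  rw [Fintype.sum_prod_type, Finset.sum_comm]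
  have inner : ∀ y : Λ → Bool,
      (∑ x : Λ → Bool,
        ({q : (Λ → Bool) × (Λ → Bool) | q.2 ∈ E ∧ ∀ i ∈ W, q.1 i = true}).indicator
          (jwt p ε) (x, y))
      = (if y ∈ E then (1:ℝ) else 0)
          * ∏ i, (if i ∈ W then cwt p ε true (y i) else bern p (y i)) := by
    intro y
    by_cases hy : y ∈ E
    · rw [if_pos hy, one_mul]
      have step : ∀ x : Λ → Bool,
          ({q : (Λ → Bool) × (Λ → Bool) | q.2 ∈ E ∧ ∀ i ∈ W, q.1 i = true}).indicator
            (jwt p ε) (x, y)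
          = ∏ i, (if i ∈ W then (if x i then cwt p ε true (y i) else 0)
              else cwt p ε (x i) (y i)) := by
        intro x
        by_cases hx : ∀ i ∈ W, x i = true
        · rw [Set.indicator_of_mem (by exact ⟨hy, hx⟩)]
          unfold jwt
          refine Finset.prod_congr rfl fun i _ => ?_
          by_cases hi : i ∈ W
          · simp [hi, hx i hi]
          · simp [hi]
        · rw [Set.indicator_of_notMem (by simp only [Set.mem_setOf_eq]; tauto)]
          push_neg at hx
          obtain ⟨i, hiW, hif⟩ := hx
          rw [eq_comm]
          refine Finset.prod_eq_zero (Finset.mem_univ i) ?_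
          have hif' : x i = false := by simpa using hif
          simp [hiW, hif']
      rw [Finset.sum_congr rfl (fun x _ => step x)]
      rw [show (∑ x : Λ → Bool, ∏ i,
            (if i ∈ W then (if x i then cwt p ε true (y i) else 0) else cwt p ε (x i) (y i)))
          = ∏ i, ((if i ∈ W then (if true then cwt p ε true (y i) else 0)
                else cwt p ε true (y i))
              + (if i ∈ W then (if false then cwt p ε true (y i) else 0)
                else cwt p ε false (y i))) from
        sum_prod_bool (fun i b => if i ∈ W then (if b then cwt p ε true (y i) else 0)
          else cwt p ε b (y i))]
      refine Finset.prod_congr rfl fun i _ => ?_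
      by_cases hi : i ∈ W
      · simp [hi]
      · simp [hi, cwt_sum]
    · rw [if_neg hy, zero_mul]
      refine Finset.sum_eq_zero fun x _ => ?_
      rw [Set.indicator_of_notMem (by simp only [Set.mem_setOf_eq]; tauto)]
  rw [Finset.sum_congr rfl (fun y _ => inner y)]
  have prodeq : ∀ y : Λ → Bool,
      (∏ i, (if i ∈ W then cwt p ε true (y i) else bern p (y i)))
        = p ^ W.card * genWt (condW p ε W) y := by
    intro y
    have : ∀ i : Λ, (if i ∈ W then cwt p ε true (y i) else bern p (y i))
        = (if i ∈ W then p else 1) * condW p ε W i (y i) := by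
      intro i
      by_cases hi : i ∈ W
      · simp only [hi, if_pos, condW, cwt_true]
      · simp [hi, condW]
    rw [Finset.prod_congr rfl (fun i _ => this i), Finset.prod_mul_distrib]
    congr 1
    rw [Finset.prod_ite_mem, Finset.univ_inter, Finset.prod_const]
  calc ∑ y : Λ → Bool, (if y ∈ E then (1:ℝ) else 0)
          * ∏ i, (if i ∈ W then cwt p ε true (y i) else bern p (y i))
      = ∑ y : Λ → Bool, p ^ W.card * ((if y ∈ E then (1:ℝ) else 0) * genWt (condW p ε W) y) := by
        refine Finset.sum_congr rfl fun y _ => ?_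
        rw [prodeq y]; ring
    _ = p ^ W.card * genPr (condW p ε W) E := by
        rw [← Finset.mul_sum]
        congr 1
        exact Finset.sum_congr rfl fun y _ => (indicator_pt (genWt (condW p ε W)) y).symm

lemma pr_eq_genPr (p : ℝ) (A : Set (Λ → Bool)) : pr p A = genPr (fun _ => bern p) A := rfl

lemma pr_ones (p : ℝ) (W : Finset Λ) :
    pr p {ω : Λ → Bool | ∀ i ∈ W, ω i = true} = p ^ W.card := by
  rw [pr_eq_genPr, genPr_ones (fun i => by simp [bern])]
  simp [bern, Finset.prod_const]

/-- Degenerate weights: all ones on `W`, Bernoulli off `W`. -/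
noncomputable def oneW (p : ℝ) (W : Finset Λ) : Λ → Bool → ℝ := fun i b =>
  if i ∈ W then (if b then 1 else 0) else bern p b

lemma oneW_nonneg {p : ℝ} (hp : p ∈ Set.Ioo (0:ℝ) 1) (W : Finset Λ) (i : Λ) (b : Bool) :
    0 ≤ oneW p W i b := by
  by_cases h : i ∈ W <;> cases b <;> simp [oneW, bern, h] <;> linarith [hp.1, hp.2]

lemma oneW_sum (p : ℝ) (W : Finset Λ) (i : Λ) :
    oneW p W i true + oneW p W i false = 1 := by
  by_cases h : i ∈ W <;> simp [oneW, bern, h]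

lemma pr_and_ones (p : ℝ) (W : Finset Λ) (P : Set (Λ → Bool)) :
    pr p {ω : Λ → Bool | ω ∈ P ∧ ∀ i ∈ W, ω i = true}
      = p ^ W.card * genPr (oneW p W) P := by
  classical
  unfold pr genPr
  rw [Finset.mul_sum]
  refine Finset.sum_congr rfl fun ω _ => ?_
  by_cases hones : ∀ i ∈ W, ω i = true
  · have hwt : wt p ω = p ^ W.card * genWt (oneW p W) ω := by
      unfold wt genWt
      have : ∀ i : Λ, bern p (ω i) = (if i ∈ W then p else 1) * oneW p W i (ω i) := by
        intro i
        by_cases hi : i ∈ W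
        · simp [hi, oneW, hones i hi, bern]
        · simp [hi, oneW]
      rw [Finset.prod_congr rfl (fun i _ => this i), Finset.prod_mul_distrib,
        Finset.prod_ite_mem, Finset.univ_inter, Finset.prod_const]
    by_cases hP : ω ∈ P
    · rw [Set.indicator_of_mem (by exact ⟨hP, hones⟩), Set.indicator_of_mem hP, hwt]
    · rw [Set.indicator_of_notMem (by simp only [Set.mem_setOf_eq]; tauto),
        Set.indicator_of_notMem hP, mul_zero]
  · have hzero : genWt (oneW p W) ω = 0 := by
      push_neg at hones
      obtain ⟨i, hiW, hif⟩ := hones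
      have hif' : ω i = false := by simpa using hif
      exact Finset.prod_eq_zero (Finset.mem_univ i) (by simp [oneW, hiW, hif'])
    rw [Set.indicator_of_notMem (by simp only [Set.mem_setOf_eq]; tauto)]
    by_cases hP : ω ∈ P
    · rw [Set.indicator_of_mem hP, hzero, mul_zero]
    · rw [Set.indicator_of_notMem hP, mul_zero]

/-- Existence of a minimal forcing subset. -/
lemma exists_witness_subset (f : (Λ → Bool) → Bool) (S : Finset Λ) (hS : ForcesOne f S) :
    ∃ W ⊆ S, IsOneWitness f W := by
  classical
  induction S using Finset.strongInductionOn with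
  | _ S ih =>
    by_cases hmin : ∀ W' ⊆ S, ForcesOne f W' → W' = S
    · exact ⟨S, subset_refl S, hS, hmin⟩
    · push_neg at hmin
      obtain ⟨T, hTS, hT, hTne⟩ := hmin
      obtain ⟨W, hWT, hW⟩ := ih T (Finset.ssubset_iff_subset_ne.2 ⟨hTS, hTne⟩) hT
      exact ⟨W, hWT.trans hTS, hW⟩

lemma exists_witness_of_true {f : (Λ → Bool) → Bool} (hf : MonotoneBool f)
    {η : Λ → Bool} (hη : f η = true) :
    ∃ W : Finset Λ, IsOneWitness f W ∧ ∀ i ∈ W, η i = true := by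
  classical
  set S : Finset Λ := Finset.univ.filter (fun i => η i = true) with hs
  have hforce : ForcesOne f S := by
    intro ω hω
    have hle : η ≤ ω := by
      intro i
      by_cases hi : η i = true
      · rw [hω i (by simp [hs, hi]), hi]
      · rw [Bool.not_eq_true] at hi
        rw [hi]; exact Bool.false_le _
    have := hf hle
    rw [hη] at this
    exact Bool.eq_true_of_true_le this
  obtain ⟨W, hWS, hW⟩ := exists_witness_subset f S hforce
  exact ⟨W, hW, fun i hi => by simpa [hs] using hWS hi⟩

end Aux3

section Main
set_option linter.unusedSectionVars false

variable {Λ : Type*} [Fintype Λ] [DecidableEq Λ]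

lemma upClosed_exists_ones (𝒲 : Finset Λ → Prop) :
    UpClosed {ω : Λ → Bool | ∃ W', 𝒲 W' ∧ ∀ i ∈ W', ω i = true} := by
  intro ω i hω
  obtain ⟨W', hW', hones⟩ := hω
  refine ⟨W', hW', fun j hj => ?_⟩
  by_cases hji : j = i
  · subst hji; simp
  · rw [Function.update_of_ne hji]; exact hones j hj

lemma upClosed_ones (W : Finset Λ) :
    UpClosed {ω : Λ → Bool | ∀ i ∈ W, ω i = true} := by
  intro ω i hω j hj
  by_cases hji : j = i
  · subst hji; simp
  · rw [Function.update_of_ne hji]; exact hω j hj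

lemma upClosed_f {f : (Λ → Bool) → Bool} (hf : MonotoneBool f) :
    UpClosed {ω : Λ → Bool | f ω = true} := by
  intro ω i hω
  have hle : ω ≤ Function.update ω i true := by
    intro j
    by_cases hji : j = i
    · subst hji; simp [Bool.le_true]
    · rw [Function.update_of_ne hji]
  have := hf hle
  rw [Set.mem_setOf_eq] at hω
  rw [hω] at this
  exact Bool.eq_true_of_true_le this

/-- The central quantitative bound for a single function. -/
lemma main_bound {p ε : ℝ} (hp : p ∈ Set.Ioo (0:ℝ) 1) (hε : ε ∈ Set.Ioo (0:ℝ) 1)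
    (f : (Λ → Bool) → Bool) (hmono : MonotoneBool f) (ℓ : ℕ)
    (hmin : ∀ W : Finset Λ, IsOneWitness f W → ℓ ≤ W.card) :
    0 ≤ oneSNSgap p ε f ∧
      oneSNSgap p ε f ≤ overlapGap p f + Real.exp (-(ε * (1 - p) * (ℓ : ℝ))) := by
  classical
  obtain ⟨hp0, hp1⟩ := hp
  obtain ⟨hε0, hε1⟩ := hε
  have hδ0 : 0 < ε * (1 - p) := by nlinarith
  have hδ1 : ε * (1 - p) < 1 := by nlinarith
  have hbern1 : ∀ i : Λ, bern p true + bern p false = 1 := fun _ => by simp [bern]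
  have hEexp : (0:ℝ) < Real.exp (-(ε * (1 - p) * (ℓ : ℝ))) := Real.exp_pos _
  -- the value of the conditional probability
  have hcond : ∀ W : Finset Λ,
      prNoisyOneGivenOnes p ε f W = genPr (condW p ε W) {ω | f ω = true} := by
    intro W
    unfold prNoisyOneGivenOnes
    have e1 : {q : (Λ → Bool) × (Λ → Bool) | f q.2 = true ∧ ∀ i ∈ W, q.1 i = true}
        = {q : (Λ → Bool) × (Λ → Bool) |
            q.2 ∈ {ω : Λ → Bool | f ω = true} ∧ ∀ i ∈ W, q.1 i = true} := rfl
    have e2 : {q : (Λ → Bool) × (Λ → Bool) | ∀ i ∈ W, q.1 i = true}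
        = {q : (Λ → Bool) × (Λ → Bool) |
            q.2 ∈ (Set.univ : Set (Λ → Bool)) ∧ ∀ i ∈ W, q.1 i = true} := by
      ext q; simp
    rw [e1, e2, jpr_cond, jpr_cond, genPr_univ (condW_sum p ε W), mul_one]
    rw [mul_comm, mul_div_assoc, div_self (pow_ne_zero _ (ne_of_gt hp0)), mul_one]
  -- lower bound for each witness
  have hlow : ∀ W : Finset Λ, IsOneWitness f W →
      pr p {ω | f ω = true} ≤ prNoisyOneGivenOnes p ε f W := by
    intro W hW
    rw [hcond W, pr_eq_genPr]
    refine genPr_le_genPr _ _ (fun j b => bern_nonneg_s15 ⟨hp0, hp1⟩ b)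
      (condW_nonneg ⟨hp0, hp1⟩ ⟨hε0, hε1⟩ W) (fun i => by rw [hbern1 i, condW_sum])
      (fun i => ?_) (upClosed_f hmono)
    by_cases hi : i ∈ W
    · simp only [bern, condW, hi, if_pos, if_true]
      nlinarith
    · simp [bern, condW, hi]
  -- upper bound for each witness
  have hup : ∀ W : Finset Λ, IsOneWitness f W →
      prNoisyOneGivenOnes p ε f W - pr p {ω | f ω = true}
        ≤ overlapGap p f + Real.exp (-(ε * (1 - p) * (ℓ : ℝ))) := by
    intro W hW
    set A : Set (Λ → Bool) := {ω | ∀ i ∈ W, ω i = true} with hA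
    set B : Set (Λ → Bool) := {ω | ∃ W' : Finset Λ, (IsOneWitness f W' ∧ W' ≠ W ∧
        (W' ∩ W).Nonempty) ∧ ∀ i ∈ W', ω i = true} with hB
    set C : Set (Λ → Bool) := {ω | ∃ W' : Finset Λ, (IsOneWitness f W' ∧ W' ∩ W = ∅)
        ∧ ∀ i ∈ W', ω i = true} with hC
    have hincl : {ω : Λ → Bool | f ω = true} ⊆ A ∪ (B ∪ C) := by
      intro η hη
      obtain ⟨W'', hW'', hones⟩ := exists_witness_of_true hmono hη
      by_cases hWW : W'' = W
      · subst hWW; exact Or.inl hones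
      · by_cases hint : (W'' ∩ W).Nonempty
        · exact Or.inr (Or.inl ⟨W'', ⟨hW'', hWW, hint⟩, hones⟩)
        · exact Or.inr (Or.inr ⟨W'',
            ⟨hW'', Finset.not_nonempty_iff_eq_empty.1 hint⟩, hones⟩)
    have hcw := condW_nonneg ⟨hp0, hp1⟩ ⟨hε0, hε1⟩ (Λ := Λ) W
    -- bound on A
    have hgA : genPr (condW p ε W) A ≤ Real.exp (-(ε * (1 - p) * (ℓ : ℝ))) := by
      rw [hA, genPr_ones (condW_sum p ε W) W]
      have e : ∀ i ∈ W, condW p ε W i true = 1 - ε * (1 - p) := by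
        intro i hi; simp [condW, hi]
      rw [Finset.prod_congr rfl e, Finset.prod_const]
      have h1 : (0:ℝ) ≤ 1 - ε * (1 - p) := by linarith
      have h2 : 1 - ε * (1 - p) ≤ Real.exp (-(ε * (1 - p))) := by
        have := Real.add_one_le_exp (-(ε * (1 - p)))
        linarith
      have h3 : Real.exp (-(ε * (1 - p))) ≤ 1 := by
        rw [Real.exp_le_one_iff]
        linarith
      calc (1 - ε * (1 - p)) ^ W.card
          ≤ Real.exp (-(ε * (1 - p))) ^ W.card := pow_le_pow_left₀ h1 h2 _
        _ ≤ Real.exp (-(ε * (1 - p))) ^ ℓ :=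
            pow_le_pow_of_le_one (Real.exp_pos _).le h3 (hmin W hW)
        _ = Real.exp (-(ε * (1 - p) * (ℓ : ℝ))) := by
            rw [← Real.exp_nat_mul]
            congr 1
            ring
    -- bound on B
    have hgB : genPr (condW p ε W) B ≤ overlapGap p f := by
      have hstep : genPr (condW p ε W) B ≤ genPr (oneW p W) B := by
        refine genPr_le_genPr _ _ hcw (oneW_nonneg ⟨hp0, hp1⟩ W)
          (fun i => by rw [condW_sum, oneW_sum]) (fun i => ?_)
          (upClosed_exists_ones _)
        by_cases hi : i ∈ W
        · simp only [condW, oneW, hi, if_pos, if_true]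
          linarith
        · simp [condW, oneW, hi]
      have hval : genPr (oneW p W) B
          = pr p {ω : Λ → Bool | ω ∈ B ∧ ∀ i ∈ W, ω i = true} / p ^ W.card := by
        rw [pr_and_ones]
        field_simp
      have hterm : genPr (oneW p W) B
          ≤ ⨆ W' : {W' : Finset Λ // IsOneWitness f W'},
              pr p {ω | (∃ W'' : Finset Λ, IsOneWitness f W'' ∧ W'' ≠ W'.1 ∧
                  (W'' ∩ W'.1).Nonempty ∧ ∀ i ∈ W'', ω i = true) ∧
                  ∀ i ∈ W'.1, ω i = true}
                / pr p {ω | ∀ i ∈ W'.1, ω i = true} := by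
        have hBset : {ω : Λ → Bool | ω ∈ B ∧ ∀ i ∈ W, ω i = true}
            = {ω : Λ → Bool | (∃ W'' : Finset Λ, IsOneWitness f W'' ∧ W'' ≠ W ∧
                (W'' ∩ W).Nonempty ∧ ∀ i ∈ W'', ω i = true) ∧ ∀ i ∈ W, ω i = true} := by
          ext ω
          simp only [hB, Set.mem_setOf_eq]
          constructor
          · rintro ⟨⟨W', ⟨h1, h2, h3⟩, h4⟩, h5⟩
            exact ⟨⟨W', h1, h2, h3, h4⟩, h5⟩
          · rintro ⟨⟨W', h1, h2, h3, h4⟩, h5⟩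
            exact ⟨⟨W', ⟨h1, h2, h3⟩, h4⟩, h5⟩
        have := le_ciSup (f := fun W' : {W' : Finset Λ // IsOneWitness f W'} =>
            pr p {ω | (∃ W'' : Finset Λ, IsOneWitness f W'' ∧ W'' ≠ W'.1 ∧
                (W'' ∩ W'.1).Nonempty ∧ ∀ i ∈ W'', ω i = true) ∧
                ∀ i ∈ W'.1, ω i = true}
              / pr p {ω | ∀ i ∈ W'.1, ω i = true})
          (Set.Finite.bddAbove (Set.finite_range _)) ⟨W, hW⟩
        refine le_trans (le_of_eq ?_) this
        rw [hval, hBset, pr_ones]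
      exact le_trans hstep (le_trans hterm (le_of_eq rfl))
    -- bound on C
    have hgC : genPr (condW p ε W) C ≤ pr p {ω | f ω = true} := by
      have hindep : genPr (condW p ε W) C = genPr (fun _ => bern p) C := by
        refine genPr_eq_genPr _ _ W (fun j hj => ?_) (fun i _ => by
          rw [condW_sum, hbern1 i]) (fun i hiW ω b => ?_)
        · funext b; simp [condW, hj]
        · constructor
          · rintro ⟨W', ⟨hW', hdisj⟩, hones⟩
            refine ⟨W', ⟨hW', hdisj⟩, fun j hj => ?_⟩
            have hji : j ≠ i := by
              intro h
              subst h
              have : j ∈ W' ∩ W := Finset.mem_inter.2 ⟨hj, hiW⟩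
              rw [hdisj] at this
              exact absurd this (Finset.notMem_empty j)
            have := hones j hj
            rwa [Function.update_of_ne hji] at this
          · rintro ⟨W', ⟨hW', hdisj⟩, hones⟩
            refine ⟨W', ⟨hW', hdisj⟩, fun j hj => ?_⟩
            have hji : j ≠ i := by
              intro h
              subst h
              have : j ∈ W' ∩ W := Finset.mem_inter.2 ⟨hj, hiW⟩
              rw [hdisj] at this
              exact absurd this (Finset.notMem_empty j)
            rw [Function.update_of_ne hji]
            exact hones j hj
      rw [hindep, ← pr_eq_genPr, pr_eq_genPr, pr_eq_genPr]
      refine genPr_mono (fun j b => bern_nonneg_s15 ⟨hp0, hp1⟩ b) ?_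
      rintro ω ⟨W', ⟨hW', _⟩, hones⟩
      exact hW'.1 ω hones
    -- combine
    have hsplit : genPr (condW p ε W) {ω | f ω = true}
        ≤ genPr (condW p ε W) A + genPr (condW p ε W) B + genPr (condW p ε W) C := by
      calc genPr (condW p ε W) {ω | f ω = true}
          ≤ genPr (condW p ε W) (A ∪ (B ∪ C)) := genPr_mono hcw hincl
        _ ≤ genPr (condW p ε W) A + genPr (condW p ε W) (B ∪ C) := genPr_union_le hcw _ _
        _ ≤ genPr (condW p ε W) A + (genPr (condW p ε W) B + genPr (condW p ε W) C) := by
            linarith [genPr_union_le hcw B C]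
        _ = _ := by ring
    rw [hcond W]
    linarith
  -- assemble
  unfold oneSNSgap
  by_cases hne : Nonempty {W : Finset Λ // IsOneWitness f W}
  · constructor
    · obtain ⟨w0⟩ := hne
      refine le_trans ?_ (le_ciSup (Set.Finite.bddAbove (Set.finite_range _)) w0)
      have := hlow w0.1 w0.2
      linarith
    · exact ciSup_le fun w => hup w.1 w.2
  · have he : IsEmpty {W : Finset Λ // IsOneWitness f W} := not_nonempty_iff.1 hne
    rw [Real.iSup_of_isEmpty]
    have hov : overlapGap p f = 0 := by
      unfold overlapGap
      exact Real.iSup_of_isEmpty _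
    constructor
    · exact le_refl 0
    · rw [hov]; linarith
end Main

/-- If a sequence of monotone Boolean functions is 1-witness-disjoint, and
`ℓ_n` is the minimum size of a 1-witness with `ε(n)·(1-p_n)·ℓ_n → ∞`, then the sequence is
1-strongly noise sensitive w.r.t. `ε(n)`. -/
theorem stmt15 {Λ : ℕ → Type*} [∀ n, Fintype (Λ n)] [∀ n, DecidableEq (Λ n)]
    (p : ℕ → ℝ) (hp : ∀ n, p n ∈ Set.Ioo (0 : ℝ) 1)
    (f : ∀ n, (Λ n → Bool) → Bool) (hmono : ∀ n, MonotoneBool (f n))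
    (hdisj : Tendsto (fun n => overlapGap (p n) (f n)) atTop (nhds 0))
    (ℓ : ℕ → ℕ)
    (hmin : ∀ n (W : Finset (Λ n)), IsOneWitness (f n) W → ℓ n ≤ W.card)
    (ε : ℕ → ℝ) (hε : ∀ n, ε n ∈ Set.Ioo (0 : ℝ) 1)
    (hbig : Tendsto (fun n => ε n * (1 - p n) * (ℓ n : ℝ)) atTop atTop) :
    Tendsto (fun n => oneSNSgap (p n) (ε n) (f n)) atTop (nhds 0) := by
  have key := fun n => main_bound (hp n) (hε n) (f n) (hmono n) (ℓ n)
    (fun W hW => hmin n W hW)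
  refine squeeze_zero (fun n => (key n).1) (fun n => (key n).2) ?_
  have h1 : Tendsto (fun n => Real.exp (-(ε n * (1 - p n) * (ℓ n : ℝ)))) atTop (nhds 0) := by
    have h2 : Tendsto (fun n => -(ε n * (1 - p n) * (ℓ n : ℝ))) atTop atBot :=
      tendsto_neg_atTop_atBot.comp hbig
    exact Real.tendsto_exp_atBot.comp h2
  simpa using hdisj.add h1

end BooleanNoise
end
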